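/- Let K ≥ 2 and c_k > 0, b_k > 1 for all k with c_1 ≥ c_2 ≥ … ≥ c_K. Let A(σ) = c_{σ(1)}(b_{σ(1)} − 1) + Σ_{k=2}^K c_{σ(k)}(b_{σ(k)} − 1)∏_{j<k} b_{σ(j)} for a permutation σ of {1,…,K}, where crucially the product rates compose so total ∏ b is permutation-invariant. Then for adjacent transposition: if c_{σ(m)} < c_{σ(m+1)} for some m, swapping positions m and m+1 does not increase A(σ); hence A is minimized by the identity ordering c_1 ≥ … ≥ c_K. -/

import Mathlib

open Finset

private lemma pair_split {β : Type*} [AddCommMonoid β] {n : ℕ} (M M' : Fin n)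
    (h : M ≠ M') (f : Fin n → β) :
    ∑ k, f k = (∑ k ∈ univ \ {M, M'}, f k) + (f M + f M') := by
  rw [← Finset.sum_sdiff (Finset.subset_univ {M, M'}), Finset.sum_pair h]

/-- Exact change of the balanced value under an adjacent swap. -/
private lemma swapA {K : ℕ} (b c : Fin K → ℝ)
    (σ : Equiv.Perm (Fin K)) (M M' : Fin K) (hMM : (M : ℕ) + 1 = (M' : ℕ)) :
    ∑ k, c ((σ * Equiv.swap M M') k) * (b ((σ * Equiv.swap M M') k) - 1) *
        ∏ j ∈ univ.filter (fun j => j < k), b ((σ * Equiv.swap M M') j)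
    = (∑ k, c (σ k) * (b (σ k) - 1) *
        ∏ j ∈ univ.filter (fun j => j < k), b (σ j))
      + (∏ j ∈ univ.filter (fun j => j < M), b (σ j)) *
          ((b (σ M) - 1) * ((b (σ M') - 1) * (c (σ M) - c (σ M')))) := by
  set τ := Equiv.swap M M' with hτdef
  have hne : M ≠ M' := by intro h; rw [h] at hMM; omega
  have hlt : M < M' := by rw [Fin.lt_def]; omega
  have hfix : ∀ j : Fin K, j ≠ M → j ≠ M' → τ j = j := fun j h1 h2 =>
    Equiv.swap_apply_of_ne_of_ne h1 h2
  have hτM : τ M = M' := Equiv.swap_apply_left M M'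
  have hτM' : τ M' = M := Equiv.swap_apply_right M M'
  have happ : ∀ k, (σ * τ) k = σ (τ k) := fun k => rfl
  have hprod : ∀ k : Fin K, k ≠ M → k ≠ M' →
      (∏ j ∈ univ.filter (fun j => j < k), b (σ (τ j)))
        = ∏ j ∈ univ.filter (fun j => j < k), b (σ j) := by
    intro k hk hk'
    rcases lt_or_ge k M' with h | h
    · have hkM : k < M := by
        rw [Fin.lt_def] at h ⊢
        have hvk : (k : ℕ) ≠ (M : ℕ) := fun hh => hk (Fin.ext hh)
        omega
      refine Finset.prod_congr rfl fun j hj => ?_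
      simp only [mem_filter] at hj
      have hjM : j < M := hj.2.trans hkM
      rw [hfix j hjM.ne (hjM.trans hlt).ne]
    · have hM'k : M' < k := lt_of_le_of_ne h (Ne.symm hk')
      refine Equiv.Perm.prod_comp τ _ (fun j => b (σ j)) ?_
      intro a ha
      have hamem : a = M ∨ a = M' := by
        by_contra hcon
        push_neg at hcon
        exact ha (hfix a hcon.1 hcon.2)
      simp only [Finset.coe_filter, Set.mem_setOf_eq, mem_univ, true_and]
      rcases hamem with rfl | rfl
      · exact hlt.trans hM'k
      · exact hM'k
  have hPM : (∏ j ∈ univ.filter (fun j => j < M), b (σ (τ j)))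
      = ∏ j ∈ univ.filter (fun j => j < M), b (σ j) := by
    refine Finset.prod_congr rfl fun j hj => ?_
    simp only [mem_filter] at hj
    rw [hfix j hj.2.ne (hj.2.trans hlt).ne]
  have hins : univ.filter (fun j : Fin K => j < M')
      = insert M (univ.filter (fun j : Fin K => j < M)) := by
    ext j
    simp only [mem_filter, mem_univ, true_and, mem_insert, Fin.lt_def, Fin.ext_iff]
    omega
  have hMnot : M ∉ univ.filter (fun j : Fin K => j < M) := by simp
  rw [pair_split M M' hne (fun k => c ((σ * τ) k) * (b ((σ * τ) k) - 1) *
        ∏ j ∈ univ.filter (fun j => j < k), b ((σ * τ) j)),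
      pair_split M M' hne (fun k => c (σ k) * (b (σ k) - 1) *
        ∏ j ∈ univ.filter (fun j => j < k), b (σ j))]
  have hrest : (∑ k ∈ univ \ {M, M'}, c ((σ * τ) k) * (b ((σ * τ) k) - 1) *
        ∏ j ∈ univ.filter (fun j => j < k), b ((σ * τ) j))
      = ∑ k ∈ univ \ {M, M'}, c (σ k) * (b (σ k) - 1) *
        ∏ j ∈ univ.filter (fun j => j < k), b (σ j) := by
    refine Finset.sum_congr rfl fun k hk => ?_
    simp only [mem_sdiff, mem_insert, mem_singleton] at hk
    push_neg at hk
    obtain ⟨-, hk1, hk2⟩ := hk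
    simp only [happ]
    rw [hfix k hk1 hk2, hprod k hk1 hk2]
  simp only [hrest]
  simp only [happ, hτM, hτM', hins, Finset.prod_insert hMnot, hPM]
  ring

theorem stmt_19 (K : ℕ) (hK : 2 ≤ K) (b c : Fin K → ℝ)
    (hb : ∀ k, 1 < b k) (hc : ∀ k, 0 < c k) (hcmono : Antitone c)
    (A : Equiv.Perm (Fin K) → ℝ)
    (hA : ∀ σ, A σ = ∑ k, c (σ k) * (b (σ k) - 1) *
        ∏ j ∈ univ.filter (fun j => j < k), b (σ j)) :
    (∀ (σ : Equiv.Perm (Fin K)) (m : ℕ) (hm : m + 1 < K),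
      c (σ ⟨m, Nat.lt_of_succ_lt hm⟩) < c (σ ⟨m + 1, hm⟩) →
      A (σ * Equiv.swap ⟨m, Nat.lt_of_succ_lt hm⟩ ⟨m + 1, hm⟩) ≤ A σ) ∧
    (∀ σ : Equiv.Perm (Fin K), A 1 ≤ A σ) := by
  have hbpos : ∀ k, (0:ℝ) < b k := fun k => lt_trans one_pos (hb k)
  have hPpos : ∀ (σ : Equiv.Perm (Fin K)) (M : Fin K),
      0 < ∏ j ∈ univ.filter (fun j => j < M), b (σ j) :=
    fun σ M => Finset.prod_pos fun j _ => hbpos _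
  have hswap : ∀ (σ : Equiv.Perm (Fin K)) (M M' : Fin K), (M : ℕ) + 1 = (M' : ℕ) →
      A (σ * Equiv.swap M M') = A σ
        + (∏ j ∈ univ.filter (fun j => j < M), b (σ j)) *
            ((b (σ M) - 1) * ((b (σ M') - 1) * (c (σ M) - c (σ M')))) := by
    intro σ M M' h
    rw [hA, hA]
    exact swapA b c σ M M' h
  -- the adjacent-swap inequality, assuming the left coefficient is ≤ the right one
  have hstep : ∀ (σ : Equiv.Perm (Fin K)) (M M' : Fin K), (M : ℕ) + 1 = (M' : ℕ) →
      c (σ M) ≤ c (σ M') → A (σ * Equiv.swap M M') ≤ A σ := by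
    intro σ M M' h hcle
    rw [hswap σ M M' h]
    have ht : (b (σ M) - 1) * ((b (σ M') - 1) * (c (σ M) - c (σ M'))) ≤ 0 := by
      nlinarith [mul_nonneg (mul_nonneg (sub_nonneg.2 (hb (σ M)).le)
        (sub_nonneg.2 (hb (σ M')).le)) (sub_nonneg.2 hcle)]
    have h2 : (∏ j ∈ univ.filter (fun j => j < M), b (σ j)) *
        ((b (σ M) - 1) * ((b (σ M') - 1) * (c (σ M) - c (σ M')))) ≤ 0 :=
      mul_nonpos_of_nonneg_of_nonpos (hPpos σ M).le ht
    linarith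
  constructor
  · intro σ m hm hcσ
    exact hstep σ ⟨m, Nat.lt_of_succ_lt hm⟩ ⟨m + 1, hm⟩ rfl hcσ.le
  · -- the measure ∑ (σ i) * i strictly increases under an inversion-fixing swap
    have hμ : ∀ (σ : Equiv.Perm (Fin K)) (M M' : Fin K), (M : ℕ) + 1 = (M' : ℕ) →
        σ M' < σ M →
        (∑ i, (σ i).val * i.val) < ∑ i, ((σ * Equiv.swap M M') i).val * i.val := by
      intro σ M M' hMM hlt'
      have hne : M ≠ M' := by intro h; rw [h] at hMM; omega
      rw [pair_split M M' hne (fun i => (σ i).val * i.val),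
          pair_split M M' hne (fun i => ((σ * Equiv.swap M M') i).val * i.val)]
      have hrest : (∑ k ∈ univ \ {M, M'}, ((σ * Equiv.swap M M') k).val * k.val)
          = ∑ k ∈ univ \ {M, M'}, (σ k).val * k.val := by
        refine Finset.sum_congr rfl fun k hk => ?_
        simp only [mem_sdiff, mem_insert, mem_singleton] at hk
        push_neg at hk
        have : (σ * Equiv.swap M M') k = σ k := by
          simp [Equiv.Perm.mul_apply, Equiv.swap_apply_of_ne_of_ne hk.2.1 hk.2.2]
        rw [this]
      rw [hrest]
      apply Nat.add_lt_add_left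
      have e1 : (σ * Equiv.swap M M') M = σ M' := by
        simp [Equiv.Perm.mul_apply]
      have e2 : (σ * Equiv.swap M M') M' = σ M := by
        simp [Equiv.Perm.mul_apply]
      rw [e1, e2]
      rw [Fin.lt_def] at hlt'
      nlinarith [hlt', hMM]
    -- bound on the measure
    set B : ℕ := K * (K * K) with hB
    have hbound : ∀ σ : Equiv.Perm (Fin K), (∑ i, (σ i).val * i.val) < B := by
      intro σ
      have hne : (univ : Finset (Fin K)).Nonempty := ⟨⟨0, by omega⟩, mem_univ _⟩
      have h1 : (∑ i, (σ i).val * i.val) < ∑ _i : Fin K, K * K := by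
        refine Finset.sum_lt_sum_of_nonempty hne fun i _ => ?_
        exact Nat.mul_lt_mul_of_lt_of_le (σ i).isLt
          (Nat.le_of_lt_succ (Nat.lt_succ_of_lt i.isLt)) (by omega)
      simpa using h1
    -- strong induction on B - measure
    have main : ∀ (n : ℕ) (σ : Equiv.Perm (Fin K)),
        B - (∑ i, (σ i).val * i.val) = n → A 1 ≤ A σ := by
      intro n
      induction n using Nat.strong_induction_on with
      | _ n ih =>
        intro σ hn
        by_cases h1 : σ = 1
        · rw [h1]
        · obtain ⟨m, hm, hinv⟩ :
              ∃ m, ∃ hm : m + 1 < K, σ ⟨m + 1, hm⟩ < σ ⟨m, Nat.lt_of_succ_lt hm⟩ := by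
            by_contra hcon
            push_neg at hcon
            apply h1
            have step : ∀ (m : ℕ) (hm : m + 1 < K),
                σ ⟨m, Nat.lt_of_succ_lt hm⟩ < σ ⟨m + 1, hm⟩ := by
              intro m hm
              refine lt_of_le_of_ne (hcon m hm) ?_
              intro heq
              have h2 := σ.injective heq
              rw [Fin.mk.injEq] at h2
              omega
            have key : ∀ (d i : ℕ) (h : i + d + 1 < K),
                σ ⟨i, by omega⟩ < σ ⟨i + d + 1, h⟩ := by
              intro d
              induction d with
              | zero => intro i h; exact step i h
              | succ d ihd =>
                intro i h
                have h1' : i + d + 1 < K := by omega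
                exact (ihd i h1').trans (step (i + d + 1) h)
            have hsm : StrictMono σ := by
              intro i j hij
              have hij' : (i : ℕ) < (j : ℕ) := hij
              have hkey := key ((j : ℕ) - (i : ℕ) - 1) (i : ℕ) (by omega)
              have e1 : (⟨(i : ℕ), by omega⟩ : Fin K) = i := Fin.ext rfl
              have e2 : (⟨(i : ℕ) + ((j : ℕ) - (i : ℕ) - 1) + 1, by omega⟩ : Fin K) = j := by
                apply Fin.ext
                show (i : ℕ) + ((j : ℕ) - (i : ℕ) - 1) + 1 = (j : ℕ)
                omega
              rwa [e1, e2] at hkey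
            have hid : (σ : Fin K → Fin K) = id := by
              have h2 : StrictMono (id : Fin K → Fin K) := strictMono_id
              exact (hsm.range_inj h2).1
                (by rw [σ.surjective.range_eq, Set.range_id])
            exact Equiv.ext fun x => congrFun hid x
          set M : Fin K := ⟨m, Nat.lt_of_succ_lt hm⟩ with hM
          set M' : Fin K := ⟨m + 1, hm⟩ with hM'
          have hMM : (M : ℕ) + 1 = (M' : ℕ) := rfl
          have hμlt := hμ σ M M' hMM hinv
          have hcle : c (σ M) ≤ c (σ M') := hcmono hinv.le
          have hAle : A (σ * Equiv.swap M M') ≤ A σ := hstep σ M M' hMM hcle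
          have hb2 := hbound σ
          have hlt2 : B - (∑ i, ((σ * Equiv.swap M M') i).val * i.val) < n := by omega
          exact le_trans (ih _ hlt2 _ rfl) hAle
    intro σ
    exact main (B - (∑ i, (σ i).val * i.val)) σ rfl
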